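/- arXiv:2103.11026 — 2 statements merged into one kernel-verified Lean document; each statement's English description precedes it below -/
import Mathlib

section
/- Let f : H → ℝ be convex and differentiable on a convex set X in a real inner product space, with Hölder continuous gradient: ‖∇f(x) - ∇f(y)‖ ≤ M_ν ‖x - y‖^ν for all x, y ∈ X, where ν ∈ [0,1] and M_ν > 0. Then for any τ > 0 and any L ≥ ((1-ν)/((1+ν)·τ))^((1-ν)/(1+ν)) · M_ν^(2/(1+ν)), we have f(y) ≤ f(x) + ⟨∇f(x), y - x⟩ + (L/2)‖y - x‖² + τ/2 for all x, y ∈ X. -/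
open RealInnerProductSpace Set

theorem descent {H : Type*} [NormedAddCommGroup H] [InnerProductSpace ℝ H]
    [CompleteSpace H] (X : Set H) (hXconv : Convex ℝ X)
    (f : H → ℝ) (G : H → H)
    (hdiff : ∀ x ∈ X, HasGradientWithinAt f (G x) X x)
    (ν M : ℝ) (hν0 : 0 ≤ ν) (hM : 0 < M)
    (hHolder : ∀ x ∈ X, ∀ y ∈ X, ‖G x - G y‖ ≤ M * ‖x - y‖ ^ ν)
    {x : H} (hx : x ∈ X) {y : H} (hy : y ∈ X) :
    f y ≤ f x + ⟪G x, y - x⟫ + M / (1 + ν) * ‖y - x‖ ^ (1 + ν) := by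
  have h1ν : (0:ℝ) < 1 + ν := by linarith
  rcases eq_or_ne y x with rfl | hne
  · simp only [sub_self, inner_zero_right, norm_zero, add_zero]
    have : (0:ℝ) ≤ M / (1 + ν) * 0 ^ (1 + ν) := by positivity
    linarith
  have hv : y - x ≠ 0 := sub_ne_zero.mpr hne
  have hvn : (0:ℝ) < ‖y - x‖ := norm_pos_iff.mpr hv
  set v := y - x with hvdef
  set γ : ℝ → H := fun t => x + t • v with hγ
  have hγmem : ∀ t ∈ Icc (0:ℝ) 1, γ t ∈ X := by
    intro t ht
    have := hXconv hx hy (by linarith [ht.1, ht.2] : (0:ℝ) ≤ 1 - t) ht.1 (by ring)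
    convert this using 1
    simp only [hγ, hvdef]
    module
  set g : ℝ → ℝ := fun t => f (γ t) - f x - t * ⟪G x, v⟫ with hg
  set C : ℝ := M * ‖v‖ ^ (1 + ν) with hC
  set B : ℝ → ℝ := fun t => C * t ^ (1 + ν) / (1 + ν) with hB
  have hγd : ∀ t : ℝ, HasDerivAt γ v t := by
    intro t
    simpa [hγ] using ((hasDerivAt_id t).smul_const v).const_add x
  have hgd : ∀ t ∈ Icc (0:ℝ) 1, HasDerivWithinAt g (⟪G (γ t) - G x, v⟫) (Icc 0 1) t := by
    intro t ht
    have hf' : HasFDerivWithinAt f (InnerProductSpace.toDual ℝ H (G (γ t))) X (γ t) :=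
      hdiff (γ t) (hγmem t ht)
    have hcomp : HasDerivWithinAt (fun t => f (γ t)) (⟪G (γ t), v⟫) (Icc 0 1) t := by
      have := hf'.comp_hasDerivWithinAt t ((hγd t).hasDerivWithinAt) hγmem
      simp at this; exact this
    have : HasDerivWithinAt g (⟪G (γ t), v⟫ - ⟪G x, v⟫) (Icc 0 1) t :=
      (hcomp.sub_const (f x)).sub ((hasDerivAt_mul_const (⟪G x, v⟫)).hasDerivWithinAt)
    simpa [inner_sub_left] using this
  have hBd : ∀ t : ℝ, 0 ≤ t → HasDerivAt B (C * t ^ ν) t := by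
    intro t ht
    have h := (Real.hasDerivAt_rpow_const (x := t) (p := 1 + ν) (Or.inr (by linarith)))
    have h2 : HasDerivAt (fun t : ℝ => C * t ^ (1 + ν) / (1 + ν)) (C * ((1 + ν) * t ^ (1 + ν - 1)) / (1 + ν)) t := (h.const_mul C).div_const _
    convert h2 using 1
    rw [show (1 + ν - 1) = ν by ring]
    field_simp
  have key : g 1 ≤ B 1 := by
    have := image_le_of_deriv_right_le_deriv_boundary (f := g)
      (f' := fun t => ⟪G (γ t) - G x, v⟫) (a := 0) (b := 1)
      (B := B) (B' := fun t => C * t ^ ν)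
      (fun t ht => (hgd t ht).continuousWithinAt)
      (fun t ht => (hgd t ⟨ht.1, ht.2.le⟩).mono_of_mem_nhdsWithin (Icc_mem_nhdsGE_of_mem ht))
      (by simp [hg, hB, hγ, Real.zero_rpow (by positivity : (1:ℝ) + ν ≠ 0)])
      (fun t ht => ((hBd t ht.1).continuousAt.continuousWithinAt))
      (fun t ht => (hBd t ht.1).hasDerivWithinAt)
      ?_ (right_mem_Icc.mpr zero_le_one)
    · exact this
    · intro t ht
      have h1 : ⟪G (γ t) - G x, v⟫ ≤ ‖G (γ t) - G x‖ * ‖v‖ := real_inner_le_norm _ _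
      have h2 : ‖G (γ t) - G x‖ ≤ M * ‖γ t - x‖ ^ ν :=
        hHolder (γ t) (hγmem t ⟨ht.1, ht.2.le⟩) x hx
      have h3 : ‖γ t - x‖ = t * ‖v‖ := by
        simp [hγ, norm_smul, abs_of_nonneg ht.1]
      have h4 : (t * ‖v‖) ^ ν = t ^ ν * ‖v‖ ^ ν := Real.mul_rpow ht.1 (norm_nonneg _)
      have h5 : ‖v‖ ^ ν * ‖v‖ = ‖v‖ ^ (1 + ν) := by
        rw [show (1 + ν) = ν + 1 by ring, Real.rpow_add_one hvn.ne']
      calc ⟪G (γ t) - G x, v⟫ ≤ ‖G (γ t) - G x‖ * ‖v‖ := h1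
        _ ≤ M * ‖γ t - x‖ ^ ν * ‖v‖ := by nlinarith [norm_nonneg v]
        _ = C * t ^ ν := by rw [h3, h4, hC, ← h5]; ring
  have hg1 : g 1 = f y - f x - ⟪G x, v⟫ := by simp [hg, hγ, hvdef]
  have hB1 : B 1 = M * ‖v‖ ^ (1 + ν) / (1 + ν) := by simp [hB, hC]
  rw [hg1, hB1] at key
  have : M * ‖v‖ ^ (1 + ν) / (1 + ν) = M / (1 + ν) * ‖v‖ ^ (1 + ν) := by ring
  linarith [key, this.le]


theorem alg (ν M τ L r : ℝ) (hν : ν ∈ Set.Icc (0:ℝ) 1) (hM : 0 < M) (hτ : 0 < τ)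
    (hL : ((1 - ν) / ((1 + ν) * τ)) ^ ((1 - ν) / (1 + ν)) * M ^ (2 / (1 + ν)) ≤ L)
    (hr : 0 ≤ r) : M / (1 + ν) * r ^ (1 + ν) ≤ L / 2 * r ^ 2 + τ / 2 := by
  obtain ⟨hν0, hν1⟩ := hν
  have h1ν : (0:ℝ) < 1 + ν := by linarith
  rcases eq_or_lt_of_le hν1 with rfl | hν1
  · -- ν = 1
    have hL' : M ≤ L := by
      have h0 : ((1:ℝ) - 1) / ((1 + 1) * τ) = 0 := by ring
      have h1 : ((1:ℝ) - 1) / (1 + 1) = 0 := by norm_num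
      have h2 : (2:ℝ) / (1 + 1) = 1 := by norm_num
      rw [h0, h1, Real.rpow_zero, one_mul, h2, Real.rpow_one] at hL
      exact hL
    have : r ^ ((1:ℝ) + 1) = r ^ 2 := by
      rw [show ((1:ℝ)+1) = ((2:ℕ):ℝ) by norm_num, Real.rpow_natCast]
    rw [this]
    have h2 : (0:ℝ) ≤ r ^ 2 := sq_nonneg r
    nlinarith [mul_nonneg (sub_nonneg.mpr hL') h2]
  · -- ν < 1
    have h1mν : (0:ℝ) < 1 - ν := by linarith
    set K : ℝ := ((1 - ν) / ((1 + ν) * τ)) ^ ((1 - ν) / (1 + ν)) * M ^ (2 / (1 + ν)) with hK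
    have hKpos : 0 < K := by positivity
    have hLpos : 0 < L := lt_of_lt_of_le hKpos hL
    set p : ℝ := 2 / (1 + ν) with hp
    set q : ℝ := 2 / (1 - ν) with hq
    have hpq : p.HolderConjugate q := by
      rw [Real.holderConjugate_iff]
      constructor
      · rw [hp, lt_div_iff₀ h1ν]; linarith
      · rw [hp, hq]; field_simp; ring
    set s : ℝ := (L / (1 + ν)) ^ ((1 + ν) / 2) with hs
    have hspos : 0 < s := by positivity
    set a : ℝ := s * r ^ ((1:ℝ) + ν) with ha
    set b : ℝ := M / (1 + ν) / s with hb
    have hbpos : 0 < b := by positivity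
    have hanneg : 0 ≤ a := by positivity
    have hab : a * b = M / (1 + ν) * r ^ ((1:ℝ) + ν) := by
      rw [ha, hb]; field_simp
    have e1 : (1 + ν) / 2 * p = 1 := by rw [hp]; field_simp
    have e2 : ((1:ℝ) + ν) * p = 2 := by rw [hp]; field_simp
    have hap : a ^ p = L / (1 + ν) * r ^ 2 := by
      rw [ha, Real.mul_rpow hspos.le (Real.rpow_nonneg hr _), hs,
        ← Real.rpow_mul (by positivity), e1, Real.rpow_one,
        ← Real.rpow_mul hr, e2,
        show (2:ℝ) = ((2:ℕ):ℝ) by norm_num, Real.rpow_natCast]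
    set T : ℝ := (τ / (1 - ν)) ^ ((1 - ν) / 2) with hT
    set Q : ℝ := (1 + ν) ^ ((1 - ν) / 2) with hQ
    set P : ℝ := (1 + ν) ^ ((1 + ν) / 2) with hP
    have hTpos : 0 < T := by positivity
    have hQpos : 0 < Q := by positivity
    have hPpos : 0 < P := by positivity
    set A : ℝ := ((1 - ν) / ((1 + ν) * τ)) ^ ((1 - ν) / 2) with hA
    have hApos : 0 < A := by positivity
    have hKp : K ^ ((1 + ν) / 2) = A * M := by
      rw [hK, Real.mul_rpow (by positivity) (by positivity),
        ← Real.rpow_mul (by positivity), ← Real.rpow_mul hM.le,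
        show (1 - ν) / (1 + ν) * ((1 + ν) / 2) = (1 - ν) / 2 by field_simp,
        show 2 / (1 + ν) * ((1 + ν) / 2) = 1 by field_simp, Real.rpow_one, hA]
    have hATQ : A * T * Q = 1 := by
      rw [hA, hT, ← Real.mul_rpow (by positivity) (by positivity),
        show (1 - ν) / ((1 + ν) * τ) * (τ / (1 - ν)) = ((1+ν):ℝ)⁻¹ by field_simp,
        hQ, ← Real.mul_rpow (by positivity) h1ν.le, inv_mul_cancel₀ h1ν.ne', Real.one_rpow]
    have hPQ : P * Q = 1 + ν := by
      rw [hP, hQ, ← Real.rpow_add h1ν, show ((1+ν)/2 + (1-ν)/2 : ℝ) = 1 by ring, Real.rpow_one]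
    have hsK : K ^ ((1 + ν) / 2) / P ≤ s := by
      rw [hs, hP, Real.div_rpow hLpos.le h1ν.le]
      gcongr
    have hbT : b ≤ T := by
      have h1 : b ≤ M / (1 + ν) / (K ^ ((1 + ν) / 2) / P) := by
        rw [hb]
        gcongr
      have h2 : M / (1 + ν) / (K ^ ((1 + ν) / 2) / P) = T := by
        rw [hKp]
        rw [div_div_eq_mul_div, div_eq_iff (by positivity), ← hPQ]
        field_simp
        linear_combination (-1 : ℝ) * hATQ
      linarith
    have hbq : b ^ q ≤ τ / (1 - ν) := by
      calc b ^ q ≤ T ^ q := Real.rpow_le_rpow hbpos.le hbT (by positivity)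
        _ = τ / (1 - ν) := by
            rw [hT, hq, ← Real.rpow_mul (by positivity),
              show (1 - ν) / 2 * (2 / (1 - ν)) = 1 by field_simp, Real.rpow_one]
    have young := Real.young_inequality_of_nonneg hanneg hbpos.le hpq
    rw [hab, hap] at young
    have hfin : L / (1 + ν) * r ^ 2 / p = L / 2 * r ^ 2 := by
      rw [hp]; field_simp
    have hfin2 : b ^ q / q ≤ τ / 2 := by
      have hqpos : 0 < q := by rw [hq]; positivity
      calc b ^ q / q = b ^ q * (1 - ν) / 2 := by rw [hq]; field_simp
        _ ≤ (τ / (1 - ν)) * (1 - ν) / 2 := by gcongr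
        _ = τ / 2 := by field_simp
    linarith

theorem stmt_5 {H : Type*} [NormedAddCommGroup H] [InnerProductSpace ℝ H]
    [CompleteSpace H] (X : Set H) (hXconv : Convex ℝ X)
    (f : H → ℝ) (G : H → H) (hconv : ConvexOn ℝ X f)
    (hdiff : ∀ x ∈ X, HasGradientWithinAt f (G x) X x)
    (ν M τ L : ℝ) (hν : ν ∈ Set.Icc (0 : ℝ) 1) (hM : 0 < M) (hτ : 0 < τ)
    (hHolder : ∀ x ∈ X, ∀ y ∈ X, ‖G x - G y‖ ≤ M * ‖x - y‖ ^ ν)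
    (hL : ((1 - ν) / ((1 + ν) * τ)) ^ ((1 - ν) / (1 + ν)) * M ^ (2 / (1 + ν)) ≤ L) :
    ∀ x ∈ X, ∀ y ∈ X,
      f y ≤ f x + ⟪G x, y - x⟫ + L / 2 * ‖y - x‖ ^ 2 + τ / 2 := by
  intro x hx y hy
  have h1 := descent X hXconv f G hdiff ν M hν.1 hM hHolder hx hy
  have h2 := alg ν M τ L (‖y - x‖) hν hM hτ hL (norm_nonneg _)
  linarith
end

section
/- Suppose positive reals L_k, γ_k, Γ_k satisfy Γ_k = L_k γ_k²/k, Γ_k ≤ Γ_{k-1}, 1/Γ_k - 1/Γ_{k-1} = γ_k/Γ_k for k ≥ 2, Γ_1 = L_1γ_1², and L_k ≤ 2((1-ν)/((1+ν)εγ_k))^((1-ν)/(1+ν)) M^{2/(1+ν)} for all k, where ν ∈ (0,1), M > 0, ε > 0. Then L_k γ_k² ≤ C_ν M^{2/(1+ν)} / (k^{(1+3ν)/(1+ν)} ε^{(1-ν)/(1+ν)}) for all k ≥ 1, where C_ν = ((1+2ν)/(1+3ν))^((1+3ν)/(1+ν)) ((1-ν)/(1+ν))^((1-ν)/(1+ν))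 2^((4+10ν)/(1+ν)). -/
theorem stmt_15 (ν M ε : ℝ) (hν : ν ∈ Set.Ioo (0 : ℝ) 1) (hM : 0 < M) (hε : 0 < ε)
    (L γ Γ : ℕ → ℝ)
    (hLpos : ∀ k : ℕ, 1 ≤ k → 0 < L k) (hγpos : ∀ k : ℕ, 1 ≤ k → 0 < γ k)
    (hΓpos : ∀ k : ℕ, 1 ≤ k → 0 < Γ k)
    (hΓdef : ∀ k : ℕ, 1 ≤ k → Γ k = L k * γ k ^ 2 / (k : ℝ))
    (hγ1 : γ 1 = 1)
    (hmono : ∀ k : ℕ, 2 ≤ k → Γ k ≤ Γ (k - 1))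
    (hrel : ∀ k : ℕ, 2 ≤ k → 1 / Γ k - 1 / Γ (k - 1) = γ k / Γ k)
    (hLk : ∀ k : ℕ, 1 ≤ k →
      L k ≤ 2 * ((1 - ν) / ((1 + ν) * ε * γ k)) ^ ((1 - ν) / (1 + ν)) *
        M ^ (2 / (1 + ν))) :
    ∀ k : ℕ, 1 ≤ k →
      L k * γ k ^ 2 ≤
        (((1 + 2 * ν) / (1 + 3 * ν)) ^ ((1 + 3 * ν) / (1 + ν)) *
            ((1 - ν) / (1 + ν)) ^ ((1 - ν) / (1 + ν)) *
            (2 : ℝ) ^ ((4 + 10 * ν) / (1 + ν))) * M ^ (2 / (1 + ν)) /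
          ((k : ℝ) ^ ((1 + 3 * ν) / (1 + ν)) * ε ^ ((1 - ν) / (1 + ν))) := by
  obtain ⟨hν0, hν1⟩ := hν
  have h1ν : (0:ℝ) < 1 + ν := by linarith
  have h3ν : (0:ℝ) < 1 + 3*ν := by linarith
  have h2ν : (0:ℝ) < 1 + 2*ν := by linarith
  have hmν : (0:ℝ) < 1 - ν := by linarith
  set a : ℝ := (1 - ν)/(1 + ν) with ha_def
  set P : ℝ := (1 + 3*ν)/(1 + ν) with hP_def
  set q : ℝ := (1 + ν)/(1 + 3*ν) with hq_def
  have ha0 : 0 < a := div_pos hmν h1ν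
  have ha1 : a < 1 := by rw [ha_def, div_lt_one h1ν]; linarith
  have hq0 : 0 < q := div_pos h1ν h3ν
  have hq1 : q < 1 := by rw [hq_def, div_lt_one h3ν]; linarith
  have hP1 : 1 ≤ P := by rw [hP_def, le_div_iff₀ h1ν]; linarith
  have hP0 : 0 < P := by linarith
  have hPq : P * q = 1 := by rw [hP_def, hq_def]; field_simp
  have hPa : 2 - a = P := by rw [hP_def, ha_def]; field_simp; ring
  set c : ℝ := ((1 - ν)/((1 + ν)*ε))^a * M^(2/(1+ν)) with hc_def
  have hc0 : 0 < c := mul_pos (Real.rpow_pos_of_pos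
    (div_pos hmν (mul_pos h1ν hε)) a) (Real.rpow_pos_of_pos hM _)
  have h2c : (0:ℝ) < 2*c := by linarith
  -- Key inequality: k Γ k ≤ 2c γ_k^{2-a}
  have KI : ∀ k : ℕ, 1 ≤ k → (k:ℝ) * Γ k ≤ 2*c * γ k ^ (2 - a) := by
    intro k hk
    have hk0 : (0:ℝ) < k := by exact_mod_cast hk
    have hγ := hγpos k hk
    have hLγ : (k:ℝ) * Γ k = L k * γ k ^ 2 := by
      rw [hΓdef k hk]; field_simp
    rw [hLγ]
    have hrw : ((1 - ν) / ((1 + ν) * ε * γ k)) ^ a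
        = ((1 - ν)/((1 + ν)*ε))^a * (γ k) ^ (-a) := by
      rw [show (1 - ν) / ((1 + ν) * ε * γ k) = ((1-ν)/((1+ν)*ε)) * (γ k)⁻¹ by
        field_simp, Real.mul_rpow (by positivity) (by positivity),
        Real.inv_rpow hγ.le, ← Real.rpow_neg hγ.le]
    have hL := hLk k hk
    rw [hrw] at hL
    have hexp2 : (γ k) ^ (-a) * (γ k) ^ ((2:ℕ):ℝ) = γ k ^ (2 - a) := by
      rw [← Real.rpow_add hγ]
      congr 1
      push_cast
      ring
    calc L k * γ k ^ 2
        ≤ (2 * (((1-ν)/((1+ν)*ε))^a * (γ k) ^ (-a)) * M ^ (2/(1+ν))) * γ k ^ 2 := by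
          apply mul_le_mul_of_nonneg_right hL (by positivity)
      _ = 2*c * ((γ k) ^ (-a) * (γ k) ^ ((2:ℕ):ℝ)) := by
          rw [hc_def, Real.rpow_natCast]; ring
      _ = 2*c * γ k ^ (2 - a) := by rw [hexp2]
  -- key: k^q/(2c)^q ≤ γ_k (Γ_k⁻¹)^q
  have key : ∀ k : ℕ, 1 ≤ k → (k:ℝ)^q / (2*c)^q ≤ γ k * ((Γ k)⁻¹)^q := by
    intro k hk
    have hγ := hγpos k hk
    have hΓ := hΓpos k hk
    have hk0 : (0:ℝ) < k := by exact_mod_cast hk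
    have h1 : ((k:ℝ) * Γ k/(2*c))^q ≤ γ k := by
      have h2 : (k:ℝ)*Γ k/(2*c) ≤ γ k ^ (2-a) :=
        (div_le_iff₀ h2c).2 (by linarith [KI k hk])
      calc ((k:ℝ)*Γ k/(2*c))^q ≤ (γ k ^ (2-a))^q :=
            Real.rpow_le_rpow (by positivity) h2 hq0.le
        _ = γ k := by
            rw [← Real.rpow_mul hγ.le, hPa, hPq, Real.rpow_one]
    have heq : (k:ℝ)*Γ k/(2*c) * (Γ k)⁻¹ = (k:ℝ)/(2*c) := by
      field_simp
    calc (k:ℝ)^q/(2*c)^q = ((k:ℝ)*Γ k/(2*c))^q * ((Γ k)⁻¹)^q := by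
          rw [← Real.mul_rpow (by positivity) (by positivity), heq,
            ← Real.div_rpow (by positivity) h2c.le]
      _ ≤ γ k * ((Γ k)⁻¹)^q :=
          mul_le_mul_of_nonneg_right h1 (by positivity)
  -- γ_k = 1 - Γ_k/Γ_{k-1} for k ≥ 2
  have hγeq : ∀ k : ℕ, 2 ≤ k → γ k = 1 - Γ k / Γ (k-1) := by
    intro k hk
    have hΓk := hΓpos k (by omega)
    have hΓk1 := hΓpos (k-1) (by omega)
    have h := hrel k hk
    have h2 : (1/Γ k - 1/Γ (k-1)) * Γ k = (γ k/Γ k) * Γ k := by rw [h]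
    rw [sub_mul, one_div_mul_cancel hΓk.ne', div_mul_cancel₀ _ hΓk.ne',
      div_mul_eq_mul_div, one_mul] at h2
    linarith
  -- telescoping step
  have val : ∀ k : ℕ, 2 ≤ k →
      ((Γ (k-1))⁻¹)^q ≤ ((Γ k)⁻¹)^q - q * γ k * ((Γ k)⁻¹)^q := by
    intro k hk
    have hΓk := hΓpos k (by omega)
    have hΓk1 := hΓpos (k-1) (by omega)
    have hγk := hγpos k (by omega)
    have he := hγeq k hk
    have h1γ : 0 < 1 - γ k := by
      rw [he]; simp only [sub_sub_cancel]; positivity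
    have hinv : (Γ (k-1))⁻¹ = (1 - γ k) * (Γ k)⁻¹ := by
      rw [he]
      field_simp
      ring
    have hbern : (1 - γ k)^q ≤ 1 - q * γ k := by
      have h := rpow_one_add_le_one_add_mul_self
        (s := -γ k) (by linarith) hq0.le hq1.le
      have e1 : (1:ℝ) + -γ k = 1 - γ k := by ring
      have e2 : (1:ℝ) + q * -γ k = 1 - q * γ k := by ring
      rw [e1, e2] at h
      exact h
    calc ((Γ (k-1))⁻¹)^q = (1 - γ k)^q * ((Γ k)⁻¹)^q := by
          rw [hinv, Real.mul_rpow h1γ.le (by positivity)]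
      _ ≤ (1 - q * γ k) * ((Γ k)⁻¹)^q :=
          mul_le_mul_of_nonneg_right hbern (by positivity)
      _ = ((Γ k)⁻¹)^q - q * γ k * ((Γ k)⁻¹)^q := by ring
  -- growth lemma
  have growth : ∀ n : ℕ, 1 ≤ n →
      ((n:ℝ)+1)^(1+q) ≤ (n:ℝ)^(1+q) + (1+q)*((n:ℝ)+1)^q := by
    intro n hn
    set x : ℝ := (n:ℝ)+1 with hx_def
    have hx1 : (1:ℝ) ≤ x := by
      have : (1:ℝ) ≤ (n:ℝ) := by exact_mod_cast hn
      linarith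
    have hx0 : (0:ℝ) < x := by linarith
    have hs : (-1:ℝ) ≤ -1/x := by
      rw [neg_le, neg_div, neg_neg, div_le_one hx0]; linarith
    have hb := one_add_mul_self_le_rpow_one_add hs (p := 1+q) (by linarith)
    have hxx : (1 + -1/x) = (x-1)/x := by
      field_simp
      ring
    rw [hxx, Real.div_rpow (by linarith) hx0.le] at hb
    have hb2 : (1 + (1+q) * (-1/x)) * x^(1+q) ≤ (x-1)^(1+q) :=
      (le_div_iff₀ (Real.rpow_pos_of_pos hx0 (1+q))).1 hb
    have hxq : x^(1+q) = x * x^q := by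
      rw [Real.rpow_add hx0, Real.rpow_one]
    have hlhs : (1 + (1+q) * (-1/x)) * x^(1+q) = x^(1+q) - (1+q)*x^q := by
      rw [hxq]; field_simp; ring
    rw [hlhs] at hb2
    have hxm : x - 1 = (n:ℝ) := by rw [hx_def]; ring
    rw [hxm] at hb2
    linarith
  -- main induction
  set E : ℝ := q/(1+q) / (2*c)^q with hE_def
  have hE0 : 0 < E := by positivity
  have main : ∀ k : ℕ, 1 ≤ k → E * (k:ℝ)^(1+q) ≤ ((Γ k)⁻¹)^q := by
    intro k hk
    induction k, hk using Nat.le_induction with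
    | base =>
      have hΓ1 : Γ 1 ≤ 2*c := by
        have h := KI 1 le_rfl
        simpa [hγ1, Real.one_rpow] using h
      have hΓp := hΓpos 1 le_rfl
      have h1 : ((2*c)⁻¹)^q ≤ ((Γ 1)⁻¹)^q :=
        Real.rpow_le_rpow (by positivity) (inv_anti₀ hΓp hΓ1) hq0.le
      rw [Real.inv_rpow h2c.le] at h1
      have hE1 : E ≤ ((2*c)^q)⁻¹ := by
        rw [hE_def, ← one_div]
        gcongr
        rw [div_le_one (by linarith)]; linarith
      have he : E * ((1:ℕ):ℝ)^(1+q) = E := by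
        norm_num
      rw [he]
      linarith
    | succ n hn ih =>
      have hval := val (n+1) (by omega)
      simp only [Nat.add_sub_cancel] at hval
      have hkey := key (n+1) (by omega)
      push_cast at hkey
      have hgr := growth n hn
      have hq2 : q/(2*c)^q = E*(1+q) := by
        have h2cq : ((2*c)^q) ≠ 0 := (Real.rpow_pos_of_pos h2c q).ne'
        have h1q : (1+q) ≠ 0 := by positivity
        rw [hE_def]
        field_simp
      have h3 : E * ((n:ℝ)+1)^(1+q) ≤ E * (n:ℝ)^(1+q) + q * (((n:ℝ)+1)^q / (2*c)^q) := by
        have he2 : q * (((n:ℝ)+1)^q / (2*c)^q) = E * (1+q) * ((n:ℝ)+1)^q := by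
          rw [← hq2]; ring
        rw [he2]
        calc E * ((n:ℝ)+1)^(1+q) ≤ E * ((n:ℝ)^(1+q) + (1+q)*((n:ℝ)+1)^q) :=
              mul_le_mul_of_nonneg_left hgr hE0.le
          _ = E * (n:ℝ)^(1+q) + E * (1+q) * ((n:ℝ)+1)^q := by ring
      have h4 : q * (((n:ℝ)+1)^q / (2*c)^q) ≤ q * (γ (n+1) * ((Γ (n+1))⁻¹)^q) :=
        mul_le_mul_of_nonneg_left hkey hq0.le
      push_cast
      linarith
  -- conclude
  intro k hk
  have hk0 : (0:ℝ) < k := by exact_mod_cast hk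
  have hΓ := hΓpos k hk
  have h1 : E^P * (k:ℝ)^((1+q)*P) ≤ (Γ k)⁻¹ := by
    calc E^P * (k:ℝ)^((1+q)*P) = (E * (k:ℝ)^(1+q))^P := by
          rw [Real.mul_rpow hE0.le (by positivity), ← Real.rpow_mul hk0.le]
      _ ≤ (((Γ k)⁻¹)^q)^P :=
          Real.rpow_le_rpow (by positivity) (main k hk) hP0.le
      _ = (Γ k)⁻¹ := by
          rw [← Real.rpow_mul (by positivity), mul_comm q P, hPq, Real.rpow_one]
  have h2 : Γ k ≤ (E^P * (k:ℝ)^((1+q)*P))⁻¹ := by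
    have h := inv_anti₀ (by positivity) h1
    rwa [inv_inv] at h
  have hLγ : L k * γ k ^ 2 = (k:ℝ) * Γ k := by
    rw [hΓdef k hk]; field_simp
  have hqP : (1+q)*P = P + 1 := by
    rw [add_mul, one_mul, mul_comm q P, hPq]
  have h3 : L k * γ k ^ 2 ≤ 1/(E^P * (k:ℝ)^P) := by
    rw [hLγ]
    calc (k:ℝ) * Γ k ≤ (k:ℝ) * (E^P * (k:ℝ)^((1+q)*P))⁻¹ :=
          mul_le_mul_of_nonneg_left h2 hk0.le
      _ = 1/(E^P * (k:ℝ)^P) := by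
          rw [hqP, Real.rpow_add hk0, Real.rpow_one]
          have hEPp : (0:ℝ) < E^P := Real.rpow_pos_of_pos hE0 P
          have hkPp : (0:ℝ) < (k:ℝ)^P := Real.rpow_pos_of_pos hk0 P
          field_simp
  have hEP : E^P = (q/(1+q))^P / (2*c) := by
    rw [hE_def, Real.div_rpow (by positivity) (by positivity),
      ← Real.rpow_mul h2c.le, mul_comm q P, hPq, Real.rpow_one]
  have hcε : c = a^a / ε^a * M^(2/(1+ν)) := by
    rw [hc_def]
    congr 1
    rw [show (1 - ν)/((1 + ν)*ε) = a/ε by rw [ha_def]; field_simp,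
      Real.div_rpow ha0.le hε.le]
  have hfrac : (1+q)/q = (2+4*ν)/(1+ν) := by
    rw [hq_def]; field_simp; ring
  have hinvq : ((q/(1+q))^P)⁻¹ = ((2+4*ν)/(1+ν))^P := by
    rw [← Real.inv_rpow (by positivity), inv_div, hfrac]
  have hqq0 : (0:ℝ) < (q/(1+q))^P := by positivity
  have hbound : 1/(E^P * (k:ℝ)^P)
      = (((2+4*ν)/(1+ν))^P * 2) * (a^a * M^(2/(1+ν))) / ((k:ℝ)^P * ε^a) := by
    rw [hEP, hcε, ← hinvq]
    have hεa : (0:ℝ) < ε^a := Real.rpow_pos_of_pos hε a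
    have hkP : (0:ℝ) < (k:ℝ)^P := Real.rpow_pos_of_pos hk0 P
    have hMM : (0:ℝ) < M^(2/(1+ν)) := Real.rpow_pos_of_pos hM _
    have haa : (0:ℝ) < a^a := Real.rpow_pos_of_pos ha0 a
    field_simp
  have hconst : ((2+4*ν)/(1+ν))^P * 2 ≤ ((1+2*ν)/(1+3*ν))^P * 2^((4+10*ν)/(1+ν)) := by
    have hbase : (2+4*ν)/(1+ν) = 2 * ((1+2*ν)/(1+3*ν)) * P := by
      rw [hP_def]; field_simp; ring
    rw [hbase, Real.mul_rpow (by positivity) hP0.le,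
      Real.mul_rpow (by positivity) (by positivity)]
    have hPle : P ≤ 4 := by
      rw [hP_def, div_le_iff₀ h1ν]; linarith
    have hP4 : P^P ≤ (2:ℝ)^(2*P) := by
      calc P^P ≤ (4:ℝ)^P := Real.rpow_le_rpow hP0.le hPle hP0.le
        _ = (2:ℝ)^(2*P) := by
            rw [show ((2:ℝ)*P) = ((2:ℕ):ℝ)*P by norm_num,
              Real.rpow_natCast_mul (by norm_num)]
            norm_num
    have hexp : (4+10*ν)/(1+ν) = 1 + P + 2*P := by
      rw [hP_def]; field_simp; ring
    rw [hexp, Real.rpow_add (by norm_num), Real.rpow_add (by norm_num), Real.rpow_one]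
    calc (2:ℝ)^P * ((1+2*ν)/(1+3*ν))^P * P^P * 2
        ≤ (2:ℝ)^P * ((1+2*ν)/(1+3*ν))^P * (2:ℝ)^(2*P) * 2 := by
          gcongr
      _ = ((1+2*ν)/(1+3*ν))^P * (2 * (2:ℝ)^P * (2:ℝ)^(2*P)) := by ring
  calc L k * γ k ^ 2 ≤ 1/(E^P * (k:ℝ)^P) := h3
    _ = (((2+4*ν)/(1+ν))^P * 2) * (a^a * M^(2/(1+ν))) / ((k:ℝ)^P * ε^a) := hbound
    _ ≤ (((1+2*ν)/(1+3*ν))^P * 2^((4+10*ν)/(1+ν))) * (a^a * M^(2/(1+ν)))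
          / ((k:ℝ)^P * ε^a) := by
        gcongr
    _ = (((1+2*ν)/(1+3*ν))^P * a^a * 2^((4+10*ν)/(1+ν))) * M^(2/(1+ν))
          / ((k:ℝ)^P * ε^a) := by ring
end
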